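/- arXiv:0810.2573 — 2 statements merged into one kernel-verified Lean document; each statement's English description precedes it below -/
import Mathlib

section
/- Let M be compact metric, μ a Borel probability measure, and k a symmetric, nonnegative, uniformly Lipschitz kernel with k(p,p) = 0 for all p. Let g_n be minimizers of the free energy E_{b_n} with b_n → ∞. Then (2/b_n)·E_{b_n}[g_n] → 0 as n → ∞. -/
open MeasureTheory Real Filter

/-- The free energy `E_b[f] = ∫ f log f dμ + (b/2)∫∫ k(p,q) f(p) f(q) dμ(p) dμ(q)`. -/
noncomputable def freeEnergy {M : Type*} [MeasurableSpace M] (μ : Measure M)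
    (k : M → M → ℝ) (b : ℝ) (f : M → ℝ) : ℝ :=
  (∫ x, f x * Real.log (f x) ∂μ) + b / 2 * ∫ x, ∫ y, k x y * f x * f y ∂μ ∂μ

theorem scaled_free_energy_tendsto_zero {M : Type*} [MetricSpace M] [CompactSpace M]
    [MeasurableSpace M] [BorelSpace M] (μ : Measure M) [IsProbabilityMeasure μ]
    (k : M → M → ℝ) (L : ℝ)
    (hsym : ∀ p q, k p q = k q p) (hk0 : ∀ p q, 0 ≤ k p q)
    (hkL : ∀ p q s, |k p s - k q s| ≤ L * dist p q)
    (hdiag : ∀ p, k p p = 0)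
    (b : ℕ → ℝ) (hbpos : ∀ n, 0 < b n) (hb : Tendsto b atTop atTop)
    (g : ℕ → M → ℝ) (hgm : ∀ n, Measurable (g n)) (hg0 : ∀ n x, 0 ≤ g n x)
    (hgi : ∀ n, Integrable (g n) μ) (hg1 : ∀ n, ∫ x, g n x ∂μ = 1)
    (hgent : ∀ n, Integrable (fun x => g n x * Real.log (g n x)) μ)
    (hmin : ∀ n, ∀ f : M → ℝ, Measurable f → (∀ x, 0 ≤ f x) → Integrable f μ →
      (∫ x, f x ∂μ) = 1 → Integrable (fun x => f x * Real.log (f x)) μ →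
      freeEnergy μ k (b n) (g n) ≤ freeEnergy μ k (b n) f) :
    Tendsto (fun n => 2 / b n * freeEnergy μ k (b n) (g n)) atTop (nhds 0) := by
  -- lower bound: entropy is nonnegative
  have hEnt : ∀ n, 0 ≤ ∫ x, g n x * Real.log (g n x) ∂μ := by
    intro n
    have hpt : ∀ x, g n x - 1 ≤ g n x * Real.log (g n x) := by
      intro x
      rcases (hg0 n x).eq_or_lt with h | h
      · simp [← h]
      · have h1 := Real.log_le_sub_one_of_pos (inv_pos.mpr h)
        rw [Real.log_inv] at h1
        have h2 : g n x * (g n x)⁻¹ = 1 := mul_inv_cancel₀ h.ne'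
        nlinarith
    have hmono := integral_mono (f := fun x => g n x - 1) (g := fun x => g n x * Real.log (g n x)) ((hgi n).sub (integrable_const 1)) (hgent n) hpt
    rwa [integral_sub (hgi n) (integrable_const 1), hg1 n, integral_const,
      probReal_univ, one_smul, sub_self] at hmono
  have hI : ∀ n, 0 ≤ ∫ x, ∫ y, k x y * g n x * g n y ∂μ ∂μ := fun n =>
    integral_nonneg fun x => integral_nonneg fun y =>
      mul_nonneg (mul_nonneg (hk0 x y) (hg0 n x)) (hg0 n y)
  have hlow : ∀ n, 0 ≤ freeEnergy μ k (b n) (g n) := fun n =>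
    add_nonneg (hEnt n) (mul_nonneg (div_nonneg (hbpos n).le (by norm_num)) (hI n))
  rw [NormedAddCommGroup.tendsto_nhds_zero]
  intro ε hε
  set C : ℝ := max L 0 with hCdef
  have hC : 0 ≤ C := le_max_right _ _
  have hLC : L ≤ C := le_max_left _ _
  set r : ℝ := ε / (4 * (C + 1)) with hrdef
  have hr : 0 < r := by positivity
  obtain ⟨p, hp⟩ : ∃ p : M, 0 < μ (Metric.ball p r) := by
    by_contra h
    push_neg at h
    have h0 : ∀ p : M, μ (Metric.ball p r) = 0 := fun p => le_antisymm (h p) (zero_le)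
    obtain ⟨t, ht⟩ := isCompact_univ.elim_finite_subcover (fun p : M => Metric.ball p r)
      (fun p => Metric.isOpen_ball) (fun x _ => Set.mem_iUnion.mpr ⟨x, Metric.mem_ball_self hr⟩)
    have hle : μ Set.univ ≤ ∑ i ∈ t, μ (Metric.ball i r) :=
      (measure_mono ht).trans (measure_biUnion_finset_le t _)
    simp [h0, measure_univ] at hle
  set B : Set M := Metric.ball p r with hBdef
  have hB : MeasurableSet B := measurableSet_ball
  set m : ℝ := (μ B).toReal with hmdef
  have hm : 0 < m := ENNReal.toReal_pos hp.ne' (measure_ne_top μ B)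
  set c : ℝ := m⁻¹ with hcdef
  have hc : 0 < c := inv_pos.mpr hm
  set f : M → ℝ := fun x => B.indicator (fun _ => c) x with hfdef
  have hfm : Measurable f := measurable_const.indicator hB
  have hf0 : ∀ x, 0 ≤ f x := fun x => Set.indicator_nonneg (fun _ _ => hc.le) x
  have hfi : Integrable f μ := (integrable_const c).indicator hB
  have hf1 : ∫ x, f x ∂μ = 1 := by
    rw [hfdef, integral_indicator_const _ hB, smul_eq_mul, measureReal_def, ← hmdef, mul_inv_cancel₀ hm.ne']
  have hflog : (fun x => f x * Real.log (f x)) = B.indicator (fun _ => c * Real.log c) := by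
    funext x
    by_cases hx : x ∈ B
    · simp [hfdef, Set.indicator_of_mem hx]
    · simp [hfdef, Set.indicator_of_notMem hx]
  have hfli : Integrable (fun x => f x * Real.log (f x)) μ := by
    rw [hflog]; exact (integrable_const _).indicator hB
  have hflint : ∫ x, f x * Real.log (f x) ∂μ = Real.log c := by
    rw [hflog, integral_indicator_const _ hB, smul_eq_mul, measureReal_def, ← hmdef, ← mul_assoc,
      mul_inv_cancel₀ hm.ne', one_mul]
  -- bound on the kernel on B × B
  have kb : ∀ x ∈ B, ∀ y ∈ B, k x y ≤ 2 * C * r := by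
    intro x hx y hy
    have hdx : dist x p < r := Metric.mem_ball.mp hx
    have hdy : dist y p < r := Metric.mem_ball.mp hy
    have h1 := (abs_le.mp (hkL x p y)).2
    have h2 := (abs_le.mp (hkL y p p)).2
    have hdx0 := dist_nonneg (x := x) (y := p)
    have hdy0 := dist_nonneg (x := y) (y := p)
    have hkpy : k p y = k y p := hsym p y
    have hkpp : k p p = 0 := hdiag p
    nlinarith [mul_le_mul_of_nonneg_left hdx.le hC, mul_le_mul_of_nonneg_left hdy.le hC,
      mul_le_mul_of_nonneg_right hLC hdx0, mul_le_mul_of_nonneg_right hLC hdy0]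
  have hpt : ∀ x y, k x y * f x * f y ≤ 2 * C * r * f x * f y := by
    intro x y
    by_cases hx : x ∈ B
    · by_cases hy : y ∈ B
      · exact mul_le_mul_of_nonneg_right
          (mul_le_mul_of_nonneg_right (kb x hx y hy) (hf0 x)) (hf0 y)
      · simp [hfdef, Set.indicator_of_notMem hy]
    · simp [hfdef, Set.indicator_of_notMem hx]
  have hinner : ∀ x, ∫ y, k x y * f x * f y ∂μ ≤ 2 * C * r * f x := by
    intro x
    have hint : Integrable (fun y => 2 * C * r * f x * f y) μ := hfi.const_mul _
    calc ∫ y, k x y * f x * f y ∂μ ≤ ∫ y, 2 * C * r * f x * f y ∂μ :=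
          integral_mono_of_nonneg
            (Filter.Eventually.of_forall fun y =>
              mul_nonneg (mul_nonneg (hk0 x y) (hf0 x)) (hf0 y))
            hint (Filter.Eventually.of_forall fun y => hpt x y)
      _ = 2 * C * r * f x := by
          rw [integral_const_mul, hf1, mul_one]
  have hIf : ∫ x, ∫ y, k x y * f x * f y ∂μ ∂μ ≤ 2 * C * r := by
    calc ∫ x, ∫ y, k x y * f x * f y ∂μ ∂μ ≤ ∫ x, 2 * C * r * f x ∂μ :=
          integral_mono_of_nonneg
            (Filter.Eventually.of_forall fun x => integral_nonneg fun y =>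
              mul_nonneg (mul_nonneg (hk0 x y) (hf0 x)) (hf0 y))
            (hfi.const_mul _) (Filter.Eventually.of_forall hinner)
      _ = 2 * C * r := by rw [integral_const_mul, hf1, mul_one]
  have hIf0 : 0 ≤ ∫ x, ∫ y, k x y * f x * f y ∂μ ∂μ :=
    integral_nonneg fun x => integral_nonneg fun y =>
      mul_nonneg (mul_nonneg (hk0 x y) (hf0 x)) (hf0 y)
  -- the entropy term of the bound tends to zero
  have h2 : Tendsto (fun n => 2 / b n * Real.log c) atTop (nhds 0) := by
    have hinv : Tendsto (fun n => (b n)⁻¹) atTop (nhds 0) := hb.inv_tendsto_atTop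
    have := (hinv.const_mul 2).mul_const (Real.log c)
    simpa [div_eq_mul_inv] using this
  rw [NormedAddCommGroup.tendsto_nhds_zero] at h2
  have h2Cr : 2 * C * r ≤ ε / 2 := by
    rw [hrdef, ← mul_div_assoc, div_le_div_iff₀ (by positivity) (by norm_num)]
    nlinarith
  filter_upwards [h2 (ε / 2) (by positivity)] with n hn
  have hbn := hbpos n
  have hV0 : 0 ≤ 2 / b n * freeEnergy μ k (b n) (g n) :=
    mul_nonneg (div_nonneg (by norm_num) hbn.le) (hlow n)
  have hVle : 2 / b n * freeEnergy μ k (b n) (g n) ≤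
      2 / b n * Real.log c + ∫ x, ∫ y, k x y * f x * f y ∂μ ∂μ := by
    have hmle := hmin n f hfm hf0 hfi hf1 hfli
    have := mul_le_mul_of_nonneg_left hmle (div_nonneg (by norm_num : (0:ℝ) ≤ 2) hbn.le)
    calc 2 / b n * freeEnergy μ k (b n) (g n) ≤ 2 / b n * freeEnergy μ k (b n) f := this
      _ = 2 / b n * Real.log c + ∫ x, ∫ y, k x y * f x * f y ∂μ ∂μ := by
          rw [freeEnergy, hflint]
          field_simp
  have hlog : 2 / b n * Real.log c < ε / 2 := by
    have := hn
    rw [Real.norm_eq_abs] at this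
    exact lt_of_le_of_lt (le_abs_self _) this
  rw [Real.norm_eq_abs, abs_of_nonneg hV0]
  calc 2 / b n * freeEnergy μ k (b n) (g n)
      ≤ 2 / b n * Real.log c + ∫ x, ∫ y, k x y * f x * f y ∂μ ∂μ := hVle
    _ < ε / 2 + ε / 2 := add_lt_add_of_lt_of_le hlog (hIf.trans h2Cr)
    _ = ε := by ring
end

section
/- Let M be compact metric, μ a Borel probability measure, k symmetric nonnegative uniformly Lipschitz with k(p,p)=0. Let b_n → ∞, let g_n be minimizers of E_{b_n}, and suppose the probability measures ν_n = g_n dμ converge weakly to a probability measure ν. Then k(p,q) = 0 for all p, q in the support of ν. -/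
open MeasureTheory Real Filter Metric Set

section Helpers

variable {M : Type*} [MeasurableSpace M] {μ : Measure M}

/-- A measurable a.e.-bounded function is integrable on a finite measure space. -/
lemma integrable_of_bdd' [IsFiniteMeasure μ] {f : M → ℝ}
    (hm : AEStronglyMeasurable f μ) {C : ℝ} (hC : ∀ x, |f x| ≤ C) : Integrable f μ :=
  (integrable_const C).mono' hm (Eventually.of_forall fun x => by
    simpa [Real.norm_eq_abs] using hC x)

/-- Entropy relative to a probability measure is nonnegative. -/
lemma entropy_nonneg [IsProbabilityMeasure μ] (h : M → ℝ)
    (h0 : ∀ x, 0 ≤ h x) (hi : Integrable h μ) (h1 : ∫ x, h x ∂μ = 1)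
    (hei : Integrable (fun x => h x * Real.log (h x)) μ) :
    0 ≤ ∫ x, h x * Real.log (h x) ∂μ := by
  have key : ∀ x, h x - 1 ≤ h x * Real.log (h x) := by
    intro x
    rcases eq_or_lt_of_le (h0 x) with h' | h'
    · simp [← h']
    · have h2 := Real.log_le_sub_one_of_pos (show (0:ℝ) < (h x)⁻¹ by positivity)
      rw [Real.log_inv] at h2
      have h3 : 1 - (h x)⁻¹ ≤ Real.log (h x) := by linarith
      have h4 := mul_le_mul_of_nonneg_left h3 h'.le
      rw [mul_sub, mul_inv_cancel₀ h'.ne'] at h4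
      linarith
  have h5 : ∫ x, (h x - 1) ∂μ ≤ ∫ x, h x * Real.log (h x) ∂μ :=
    integral_mono (hi.sub (integrable_const 1)) hei key
  rw [integral_sub hi (integrable_const 1), h1] at h5
  simpa using h5

variable [MetricSpace M] [BorelSpace M] {k : M → M → ℝ}

lemma kh_int [IsFiniteMeasure μ] (hck : Continuous (Function.uncurry k)) {K : ℝ}
    (hK : ∀ x y, |k x y| ≤ K) {h : M → ℝ} (hi : Integrable h μ) (x : M) :
    Integrable (fun y => k x y * h y) μ :=
  hi.bdd_mul ((hck.comp (Continuous.prodMk_right x)).aestronglyMeasurable)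
    (c := K) (ae_of_all _ fun y => by simpa [Real.norm_eq_abs] using hK x y)

lemma khh_int [IsFiniteMeasure μ] (hck : Continuous (Function.uncurry k)) {K : ℝ}
    (hK : ∀ x y, |k x y| ≤ K) {h : M → ℝ} (hi : Integrable h μ) (x : M) :
    Integrable (fun y => k x y * h x * h y) μ :=
  ((kh_int hck hK hi x).const_mul (h x)).congr (Eventually.of_forall fun y => by ring)

lemma khh_eq (h : M → ℝ) (x : M) :
    ∫ y, k x y * h x * h y ∂μ = h x * ∫ y, k x y * h y ∂μ := by
  rw [← integral_const_mul]
  congr 1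
  funext y
  ring

lemma kh_cont [IsProbabilityMeasure μ] (hck : Continuous (Function.uncurry k)) {K LL : ℝ}
    (hK : ∀ x y, |k x y| ≤ K) (hkL : ∀ p q s, |k p s - k q s| ≤ LL * dist p q)
    {h : M → ℝ} (h0 : ∀ x, 0 ≤ h x) (hi : Integrable h μ) (h1 : ∫ x, h x ∂μ = 1) :
    Continuous (fun x => ∫ y, k x y * h y ∂μ) := by
  have hlip : LipschitzWith (Real.toNNReal |LL|) (fun x => ∫ y, k x y * h y ∂μ) := by
    apply LipschitzWith.of_dist_le_mul
    intro x x'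
    rw [Real.dist_eq, Real.coe_toNNReal _ (abs_nonneg LL),
      ← integral_sub (kh_int hck hK hi x) (kh_int hck hK hi x')]
    have hpt : ∀ y, |k x y * h y - k x' y * h y| ≤ (|LL| * dist x x') * h y := by
      intro y
      rw [← sub_mul, abs_mul, abs_of_nonneg (h0 y)]
      refine mul_le_mul_of_nonneg_right ?_ (h0 y)
      exact le_trans (hkL x x' y) (mul_le_mul_of_nonneg_right (le_abs_self LL) dist_nonneg)
    calc |∫ y, (k x y * h y - k x' y * h y) ∂μ|
        ≤ ∫ y, |k x y * h y - k x' y * h y| ∂μ := by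
          simpa [Real.norm_eq_abs] using
            norm_integral_le_integral_norm (fun y => k x y * h y - k x' y * h y) (μ := μ)
      _ ≤ ∫ y, (|LL| * dist x x') * h y ∂μ :=
          integral_mono (((kh_int hck hK hi x).sub (kh_int hck hK hi x')).abs)
            (hi.const_mul _) hpt
      _ = (|LL| * dist x x') * 1 := by rw [integral_const_mul, h1]
      _ = |LL| * dist x x' := mul_one _
  exact hlip.continuous

lemma outer_int [IsProbabilityMeasure μ] (hck : Continuous (Function.uncurry k)) {K LL : ℝ}
    (hK : ∀ x y, |k x y| ≤ K) (hkL : ∀ p q s, |k p s - k q s| ≤ LL * dist p q)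
    {h : M → ℝ} (h0 : ∀ x, 0 ≤ h x) (hi : Integrable h μ) (h1 : ∫ x, h x ∂μ = 1) :
    Integrable (fun x => ∫ y, k x y * h x * h y ∂μ) μ := by
  have heq : (fun x => ∫ y, k x y * h x * h y ∂μ)
      = fun x => (∫ y, k x y * h y ∂μ) * h x := by
    funext x
    rw [khh_eq]
    ring
  rw [heq]
  refine hi.bdd_mul (kh_cont hck hK hkL h0 hi h1).aestronglyMeasurable (c := K) (ae_of_all _ fun x => ?_)
  rw [Real.norm_eq_abs]
  calc |∫ y, k x y * h y ∂μ| ≤ ∫ y, |k x y| * |h y| ∂μ := by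
        simpa [Real.norm_eq_abs] using
          norm_integral_le_integral_norm (fun y => k x y * h y) (μ := μ)
    _ ≤ ∫ y, K * h y ∂μ := integral_mono
        (((kh_int hck hK hi x).abs).congr (Eventually.of_forall fun y => abs_mul _ _))
        (hi.const_mul K)
        (fun y => by
          rw [abs_of_nonneg (h0 y)]
          exact mul_le_mul_of_nonneg_right (hK x y) (h0 y))
    _ = K := by rw [integral_const_mul, h1, mul_one]

end Helpers

section Bump

/-- A continuous bump function equal to `1` at `z` and supported in `ball z δ`. -/
noncomputable def bump {M : Type*} [MetricSpace M] (δ : ℝ) (z : M) : C(M, ℝ) :=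
  ⟨fun x => max 0 (1 - (2/δ) * dist x z),
    continuous_const.max (continuous_const.sub
      (continuous_const.mul (Continuous.dist continuous_id continuous_const)))⟩

variable {M : Type*} [MetricSpace M] {δ : ℝ} {z x : M}

lemma bump_nonneg : 0 ≤ bump δ z x := le_max_left _ _

lemma bump_le_one (hδ : 0 < δ) : bump δ z x ≤ 1 := by
  have h1 : 0 ≤ (2/δ) * dist x z := mul_nonneg (by positivity) dist_nonneg
  simp only [bump, ContinuousMap.coe_mk]
  exact max_le zero_le_one (by linarith)

lemma bump_ne_zero (hδ : 0 < δ) (hx : bump δ z x ≠ 0) : dist x z < δ := by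
  simp only [bump, ContinuousMap.coe_mk] at hx
  have h1 : 0 < 1 - (2/δ) * dist x z := by
    by_contra h
    push_neg at h
    exact hx (max_eq_left h)
  have h2 : (2/δ) * dist x z < 1 := by linarith
  rw [div_mul_eq_mul_div, div_lt_one hδ] at h2
  linarith [dist_nonneg (x := x) (y := z)]

lemma bump_half (hδ : 0 < δ) (hx : dist x z ≤ δ/4) : 1/2 ≤ bump δ z x := by
  have hδ0 : δ ≠ 0 := hδ.ne'
  have h1 : (2/δ) * dist x z ≤ (2/δ) * (δ/4) := mul_le_mul_of_nonneg_left hx (by positivity)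
  have h2 : (2/δ) * (δ/4) = 1/2 := by field_simp; ring
  simp only [bump, ContinuousMap.coe_mk]
  refine le_trans ?_ (le_max_right _ _)
  linarith

end Bump

set_option maxHeartbeats 1000000 in
theorem limit_support_kernel_zero {M : Type*} [MetricSpace M] [CompactSpace M]
    [MeasurableSpace M] [BorelSpace M] (μ : Measure M) [IsProbabilityMeasure μ]
    (k : M → M → ℝ) (L : ℝ)
    (hsym : ∀ p q, k p q = k q p) (hk0 : ∀ p q, 0 ≤ k p q)
    (hkL : ∀ p q s, |k p s - k q s| ≤ L * dist p q)
    (hdiag : ∀ p, k p p = 0)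
    (b : ℕ → ℝ) (hbpos : ∀ n, 0 < b n) (hb : Tendsto b atTop atTop)
    (g : ℕ → M → ℝ) (hgm : ∀ n, Measurable (g n)) (hg0 : ∀ n x, 0 ≤ g n x)
    (hgi : ∀ n, Integrable (g n) μ) (hg1 : ∀ n, ∫ x, g n x ∂μ = 1)
    (hgent : ∀ n, Integrable (fun x => g n x * Real.log (g n x)) μ)
    (hmin : ∀ n, ∀ f : M → ℝ, Measurable f → (∀ x, 0 ≤ f x) → Integrable f μ →
      (∫ x, f x ∂μ) = 1 → Integrable (fun x => f x * Real.log (f x)) μ →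
      freeEnergy μ k (b n) (g n) ≤ freeEnergy μ k (b n) f)
    (ν : Measure M) [IsProbabilityMeasure ν]
    (hweak : ∀ φ : C(M, ℝ),
      Tendsto (fun n => ∫ x, φ x * g n x ∂μ) atTop (nhds (∫ x, φ x ∂ν))) :
    ∀ p q : M, (∀ ε : ℝ, 0 < ε → 0 < ν (Metric.ball p ε)) →
      (∀ ε : ℝ, 0 < ε → 0 < ν (Metric.ball q ε)) → k p q = 0 := by
  intro p q hp hq
  by_contra hne0
  have hc : 0 < k p q := lt_of_le_of_ne (hk0 p q) (Ne.symm hne0)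
  -- M is nonempty
  have hne : Nonempty M := by
    by_contra hem
    rw [not_nonempty_iff] at hem
    have h1 : μ (univ : Set M) = 1 := measure_univ
    rw [Set.univ_eq_empty_iff.mpr hem, measure_empty] at h1
    exact zero_ne_one h1
  -- k is jointly continuous
  have hkcont : Continuous (Function.uncurry k) := by
    have hlip : LipschitzWith (Real.toNNReal (2 * |L|)) (Function.uncurry k) := by
      apply LipschitzWith.of_dist_le_mul
      rintro ⟨x, y⟩ ⟨x', y'⟩
      rw [Real.dist_eq, Real.coe_toNNReal _ (by positivity)]
      show |k x y - k x' y'| ≤ 2 * |L| * dist (x, y) (x', y')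
      have h1 : |k x y - k x' y| ≤ L * dist x x' := hkL x x' y
      have h2 : |k x' y - k x' y'| ≤ L * dist y y' := by
        rw [hsym x' y, hsym x' y']
        exact hkL y y' x'
      have hd1 : dist x x' ≤ dist (x, y) (x', y') := by
        rw [Prod.dist_eq]; exact le_max_left _ _
      have hd2 : dist y y' ≤ dist (x, y) (x', y') := by
        rw [Prod.dist_eq]; exact le_max_right _ _
      have e1 : L * dist x x' ≤ |L| * dist (x, y) (x', y') :=
        le_trans (mul_le_mul_of_nonneg_right (le_abs_self L) dist_nonneg)
          (mul_le_mul_of_nonneg_left hd1 (abs_nonneg L))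
      have e2 : L * dist y y' ≤ |L| * dist (x, y) (x', y') :=
        le_trans (mul_le_mul_of_nonneg_right (le_abs_self L) dist_nonneg)
          (mul_le_mul_of_nonneg_left hd2 (abs_nonneg L))
      have h3 : |k x y - k x' y'| ≤ |k x y - k x' y| + |k x' y - k x' y'| :=
        abs_sub_le _ _ _
      linarith
    exact hlip.continuous
  -- a uniform bound on k
  obtain ⟨z, -, hz⟩ := isCompact_univ.exists_isMaxOn univ_nonempty hkcont.continuousOn
  set K := Function.uncurry k z with hKdef
  have hK : ∀ x y, |k x y| ≤ K := by
    intro x y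
    rw [abs_of_nonneg (hk0 x y)]
    exact (isMaxOn_iff.mp hz) (x, y) (mem_univ _)
  set c := k p q with hcdef
  -- the radius δ
  set δ := c / (4 * (|L| + 1)) with hδdef
  have hδpos : 0 < δ := by positivity
  have hδ2 : 2 * (|L| * δ) ≤ c / 2 := by
    have h4 : (0:ℝ) < 4 * (|L| + 1) := by positivity
    have h5 : δ * (4 * (|L| + 1)) = c := div_mul_cancel₀ _ h4.ne'
    nlinarith [abs_nonneg L, hδpos.le]
  -- lower bound for k near (p, q)
  have hδk : ∀ x y, dist x p < δ → dist y q < δ → c / 2 ≤ k x y := by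
    intro x y hx hy
    have h1 : |k x y - k p y| ≤ L * dist x p := hkL x p y
    have h2 : |k p y - k p q| ≤ L * dist y q := by
      rw [hsym p y, hsym p q]
      exact hkL y q p
    have e1 : L * dist x p ≤ |L| * δ :=
      le_trans (mul_le_mul_of_nonneg_right (le_abs_self L) dist_nonneg)
        (mul_le_mul_of_nonneg_left hx.le (abs_nonneg L))
    have e2 : L * dist y q ≤ |L| * δ :=
      le_trans (mul_le_mul_of_nonneg_right (le_abs_self L) dist_nonneg)
        (mul_le_mul_of_nonneg_left hy.le (abs_nonneg L))
    have h6 : |k x y - c| ≤ L * dist x p + L * dist y q :=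
      le_trans (abs_sub_le _ (k p y) _) (by rw [hcdef]; linarith)
    have h7 : c - k x y ≤ |k x y - c| := by
      rw [abs_sub_comm]
      exact le_abs_self _
    linarith
  -- integrals of the bump functions against ν are positive
  have hAgen : ∀ z₀ : M, (∀ ε : ℝ, 0 < ε → 0 < ν (Metric.ball z₀ ε)) →
      0 < ∫ x, (bump δ z₀) x ∂ν := by
    intro z₀ hz₀
    have hint : Integrable (fun x => (bump δ z₀) x) ν :=
      integrable_of_bdd' ((bump δ z₀).continuous.aestronglyMeasurable)
        (C := 1) (fun x => abs_le.mpr ⟨by linarith [bump_nonneg (δ := δ) (z := z₀) (x := x)],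
          bump_le_one hδpos⟩)
    have hind : Integrable ((ball z₀ (δ/4)).indicator (fun _ => (1/2:ℝ))) ν :=
      (integrable_const _).indicator measurableSet_ball
    have hmono : ∀ x, (ball z₀ (δ/4)).indicator (fun _ => (1/2:ℝ)) x ≤ (bump δ z₀) x := by
      intro x
      by_cases hx : x ∈ ball z₀ (δ/4)
      · rw [indicator_of_mem hx]
        exact bump_half hδpos (le_of_lt (mem_ball.mp hx))
      · rw [indicator_of_notMem hx]
        exact bump_nonneg
    have h5 := integral_mono hind hint hmono
    rw [integral_indicator_const _ measurableSet_ball] at h5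
    have h6 : 0 < (ν (ball z₀ (δ/4))).toReal :=
      ENNReal.toReal_pos (hz₀ (δ/4) (by positivity)).ne' (measure_ne_top ν _)
    calc (0:ℝ) < (ν (ball z₀ (δ/4))).toReal • (1/2 : ℝ) := by
          rw [smul_eq_mul]
          nlinarith
      _ ≤ _ := h5
  set Ap := ∫ x, (bump δ p) x ∂ν with hApdef
  set Aq := ∫ x, (bump δ q) x ∂ν with hAqdef
  have hApos : 0 < Ap := hAgen p hp
  have hAqos : 0 < Aq := hAgen q hq
  -- the constant β and the radius ε for the comparison density
  set β := (c/2) * (Ap/2) * (Aq/2) with hβdef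
  have hβ : 0 < β := by positivity
  set ε := β / (4 * (|L| + 1)) with hεdef
  have hεpos : 0 < ε := by positivity
  set W := 2 * (|L| * ε) with hWdef
  have hW0 : 0 ≤ W := by positivity
  have hWβ : W ≤ β / 2 := by
    have h4 : (0:ℝ) < 4 * (|L| + 1) := by positivity
    have h5 : ε * (4 * (|L| + 1)) = β := div_mul_cancel₀ _ h4.ne'
    nlinarith [abs_nonneg L, hεpos.le]
  -- a ball of radius ε with positive μ-measure
  have hp₀ : ∃ p₀ : M, 0 < μ (ball p₀ ε) := by
    by_contra h
    push_neg at h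
    have hcover : (univ : Set M) ⊆ ⋃ x : M, ball x ε :=
      fun x _ => mem_iUnion.mpr ⟨x, mem_ball_self hεpos⟩
    obtain ⟨t, ht⟩ := isCompact_univ.elim_finite_subcover (fun x : M => ball x ε)
      (fun x => isOpen_ball) hcover
    have h1 : μ univ ≤ ∑ x ∈ t, μ (ball x ε) :=
      le_trans (measure_mono ht) (measure_biUnion_finset_le t _)
    have h2 : ∀ x ∈ t, μ (ball x ε) = 0 := fun x _ => le_antisymm (h x) zero_le
    rw [Finset.sum_eq_zero h2, measure_univ] at h1
    simp at h1
  obtain ⟨p₀, hp₀⟩ := hp₀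
  set B := ball p₀ ε with hBdef
  set m := (μ B).toReal with hmdef
  have hm : 0 < m := ENNReal.toReal_pos hp₀.ne' (measure_ne_top μ _)
  -- the comparison density f
  set f : M → ℝ := fun x => m⁻¹ * B.indicator (fun _ => (1:ℝ)) x with hfdef
  have hfm : Measurable f := (measurable_const.indicator measurableSet_ball).const_mul m⁻¹
  have hf0 : ∀ x, 0 ≤ f x := fun x =>
    mul_nonneg (by positivity) (indicator_nonneg (fun _ _ => zero_le_one) x)
  have hfind : Integrable (B.indicator fun _ => (1:ℝ)) μ :=
    (integrable_const 1).indicator measurableSet_ball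
  have hfi : Integrable f μ := hfind.const_mul _
  have hfint : ∫ x, f x ∂μ = 1 := by
    rw [hfdef]
    rw [integral_const_mul, integral_indicator_const _ measurableSet_ball, smul_eq_mul,
      mul_one, measureReal_def, ← hmdef]
    exact inv_mul_cancel₀ hm.ne'
  have hflog : (fun x => f x * Real.log (f x)) = B.indicator (fun _ => m⁻¹ * Real.log m⁻¹) := by
    funext x
    by_cases hx : x ∈ B
    · simp [hfdef, indicator_of_mem hx]
    · simp [hfdef, indicator_of_notMem hx]
  have hflogi : Integrable (fun x => f x * Real.log (f x)) μ := by
    rw [hflog]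
    exact (integrable_const _).indicator measurableSet_ball
  have hflogval : ∫ x, f x * Real.log (f x) ∂μ = Real.log m⁻¹ := by
    rw [hflog, integral_indicator_const _ measurableSet_ball, smul_eq_mul, measureReal_def, ← hmdef,
      ← mul_assoc, mul_inv_cancel₀ hm.ne', one_mul]
  -- upper bound for k on B × B
  have hkup : ∀ x y, x ∈ B → y ∈ B → k x y ≤ W := by
    intro x y hx hy
    have hdx : dist x p₀ < ε := mem_ball.mp hx
    have hdy : dist y p₀ < ε := mem_ball.mp hy
    have h1 : |k x y - k p₀ y| ≤ L * dist x p₀ := hkL x p₀ y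
    have h2 : |k p₀ y - k p₀ p₀| ≤ L * dist y p₀ := by
      rw [hsym p₀ y, hsym p₀ p₀]
      exact hkL y p₀ p₀
    have e1 : L * dist x p₀ ≤ |L| * ε :=
      le_trans (mul_le_mul_of_nonneg_right (le_abs_self L) dist_nonneg)
        (mul_le_mul_of_nonneg_left hdx.le (abs_nonneg L))
    have e2 : L * dist y p₀ ≤ |L| * ε :=
      le_trans (mul_le_mul_of_nonneg_right (le_abs_self L) dist_nonneg)
        (mul_le_mul_of_nonneg_left hdy.le (abs_nonneg L))
    have h4 : k x y - k p₀ p₀ ≤ |k x y - k p₀ p₀| := le_abs_self _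
    have h5 : |k x y - k p₀ p₀| ≤ |k x y - k p₀ y| + |k p₀ y - k p₀ p₀| := abs_sub_le _ _ _
    rw [hWdef]
    linarith [hdiag p₀]
  -- the interaction of f is small
  have hJup : ∫ x, ∫ y, k x y * f x * f y ∂μ ∂μ ≤ W := by
    have hpt : ∀ x y, k x y * f x * f y ≤ (W * f x) * f y := by
      intro x y
      by_cases hx : x ∈ B
      · by_cases hy : y ∈ B
        · have hk1 := hkup x y hx hy
          have h0' : 0 ≤ f x * f y := mul_nonneg (hf0 x) (hf0 y)
          nlinarith [mul_le_mul_of_nonneg_right hk1 h0']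
        · have hfy : f y = 0 := by simp [hfdef, indicator_of_notMem hy]
          rw [hfy, mul_zero, mul_zero]
      · have hfx : f x = 0 := by simp [hfdef, indicator_of_notMem hx]
        rw [hfx, mul_zero, zero_mul, mul_zero, zero_mul]
    have hinner : ∀ x, ∫ y, k x y * f x * f y ∂μ ≤ W * f x := by
      intro x
      have h1 := integral_mono (khh_int hkcont hK hfi x)
        ((hfi.const_mul (W * f x)).congr (Eventually.of_forall fun y => by ring))
        (fun y => hpt x y)
      calc ∫ y, k x y * f x * f y ∂μ ≤ ∫ y, (W * f x) * f y ∂μ := h1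
        _ = (W * f x) * 1 := by rw [integral_const_mul, hfint]
        _ = W * f x := mul_one _
    have houter := integral_mono (outer_int hkcont hK hkL hf0 hfi hfint)
      (hfi.const_mul W) hinner
    calc ∫ x, ∫ y, k x y * f x * f y ∂μ ∂μ ≤ ∫ x, W * f x ∂μ := houter
      _ = W * 1 := by rw [integral_const_mul, hfint]
      _ = W := mul_one _
  -- pointwise lower bound on k via the bump functions
  have hkey : ∀ x y, (c/2) * ((bump δ p) x * (bump δ q) y) ≤ k x y := by
    intro x y
    by_cases hzero : (bump δ p) x * (bump δ q) y = 0
    · rw [hzero, mul_zero]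
      exact hk0 x y
    · have hx0 : (bump δ p) x ≠ 0 := fun h => hzero (by rw [h, zero_mul])
      have hy0 : (bump δ q) y ≠ 0 := fun h => hzero (by rw [h, mul_zero])
      have hdx : dist x p < δ := bump_ne_zero hδpos hx0
      have hdy : dist y q < δ := bump_ne_zero hδpos hy0
      have h1 : c/2 ≤ k x y := hδk x y hdx hdy
      have h2 : (bump δ p) x * (bump δ q) y ≤ 1 :=
        le_trans (mul_le_mul (bump_le_one hδpos) (bump_le_one hδpos) bump_nonneg zero_le_one)
          (by norm_num)
      nlinarith [bump_nonneg (δ := δ) (z := p) (x := x),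
        bump_nonneg (δ := δ) (z := q) (x := y)]
  -- pick a good index n
  set ap : ℕ → ℝ := fun n => ∫ x, (bump δ p) x * g n x ∂μ with hapdef
  set aq : ℕ → ℝ := fun n => ∫ x, (bump δ q) x * g n x ∂μ with haqdef
  set C₀ := Real.log m⁻¹ with hC₀def
  set T := (4 * |C₀| + 1) / β with hTdef
  have hev : ∀ᶠ n in atTop, (Ap/2 < ap n) ∧ (Aq/2 < aq n) ∧ (T < b n) :=
    ((hweak (bump δ p)).eventually (eventually_gt_nhds (by linarith))).and
      (((hweak (bump δ q)).eventually (eventually_gt_nhds (by linarith))).and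
        (hb.eventually_gt_atTop T))
  obtain ⟨n, hapn, haqn, hbn⟩ := hev.exists
  -- integrability facts for g n
  have hbump_int : ∀ z₀ : M, Integrable (fun x => (bump δ z₀) x * g n x) μ := by
    intro z₀
    refine (hgi n).bdd_mul ((bump δ z₀).continuous.aestronglyMeasurable) (c := 1) (ae_of_all _ fun x => ?_)
    rw [Real.norm_eq_abs, abs_of_nonneg bump_nonneg]
    exact bump_le_one hδpos
  -- lower bound for the interaction of g n
  have hJlow : (c/2) * ap n * aq n ≤ ∫ x, ∫ y, k x y * g n x * g n y ∂μ ∂μ := by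
    have hinner : ∀ x, ((c/2) * ((bump δ p) x * g n x)) * aq n
        ≤ ∫ y, k x y * g n x * g n y ∂μ := by
      intro x
      have hL : Integrable (fun y => ((c/2) * ((bump δ p) x * g n x))
          * ((bump δ q) y * g n y)) μ := (hbump_int q).const_mul _
      have hpt : ∀ y, ((c/2) * ((bump δ p) x * g n x)) * ((bump δ q) y * g n y)
          ≤ k x y * g n x * g n y := by
        intro y
        have h1 := mul_le_mul_of_nonneg_right (hkey x y)
          (mul_nonneg (hg0 n x) (hg0 n y))
        calc ((c/2) * ((bump δ p) x * g n x)) * ((bump δ q) y * g n y)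
            = ((c/2) * ((bump δ p) x * (bump δ q) y)) * (g n x * g n y) := by ring
          _ ≤ k x y * (g n x * g n y) := h1
          _ = k x y * g n x * g n y := by ring
      have h2 := integral_mono hL (khh_int hkcont hK (hgi n) x) hpt
      rwa [integral_const_mul] at h2
    have hOL : Integrable (fun x => ((c/2) * ((bump δ p) x * g n x)) * aq n) μ :=
      ((hbump_int p).const_mul ((c/2) * aq n)).congr (Eventually.of_forall fun x => by ring)
    have hOR : Integrable (fun x => ∫ y, k x y * g n x * g n y ∂μ) μ :=
      outer_int hkcont hK hkL (hg0 n) (hgi n) (hg1 n)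
    have h2 := integral_mono hOL hOR hinner
    have h3 : ∫ x, ((c/2) * ((bump δ p) x * g n x)) * aq n ∂μ = (c/2) * ap n * aq n := by
      calc ∫ x, ((c/2) * ((bump δ p) x * g n x)) * aq n ∂μ
          = ∫ x, ((c/2) * aq n) * ((bump δ p) x * g n x) ∂μ := by
            congr 1
            funext x
            ring
        _ = ((c/2) * aq n) * ap n := by rw [integral_const_mul]
        _ = (c/2) * ap n * aq n := by ring
    linarith [h3 ▸ h2]
  -- combine everything
  have hEnt := entropy_nonneg (g n) (hg0 n) (hgi n) (hg1 n) (hgent n)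
  have hcmp := hmin n f hfm hf0 hfi hfint hflogi
  simp only [freeEnergy] at hcmp
  have hbn2 : (0:ℝ) ≤ b n / 2 := by linarith [hbpos n]
  have hβle : β ≤ (c/2) * ap n * aq n := by
    have h1 : 0 < Ap/2 := by linarith
    have h2 : 0 < Aq/2 := by linarith
    have h3 : 0 < c/2 := by linarith
    rw [hβdef]
    have h4 : (c/2) * (Ap/2) * (Aq/2) ≤ (c/2) * ap n * (Aq/2) :=
      mul_le_mul_of_nonneg_right (mul_le_mul_of_nonneg_left hapn.le h3.le) h2.le
    have h5 : (c/2) * ap n * (Aq/2) ≤ (c/2) * ap n * aq n :=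
      mul_le_mul_of_nonneg_left haqn.le (mul_nonneg h3.le (le_of_lt (lt_trans h1 hapn)))
    linarith
  have hub : b n / 2 * β ≤ C₀ + b n / 2 * W := by
    have h1 : b n / 2 * β ≤ b n / 2 * ((c/2) * ap n * aq n) :=
      mul_le_mul_of_nonneg_left hβle hbn2
    have h2 : b n / 2 * ((c/2) * ap n * aq n)
        ≤ b n / 2 * ∫ x, ∫ y, k x y * g n x * g n y ∂μ ∂μ :=
      mul_le_mul_of_nonneg_left hJlow hbn2
    have h4 : b n / 2 * (∫ x, ∫ y, k x y * f x * f y ∂μ ∂μ) ≤ b n / 2 * W :=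
      mul_le_mul_of_nonneg_left hJup hbn2
    rw [hflogval] at hcmp
    linarith
  have h5 : b n * β ≤ 4 * C₀ := by
    have h6 : b n / 2 * W ≤ b n / 2 * (β/2) := mul_le_mul_of_nonneg_left hWβ hbn2
    linarith
  have h6 : 4 * |C₀| + 1 < b n * β := by
    rw [hTdef] at hbn
    exact (div_lt_iff₀ hβ).mp hbn
  linarith [le_abs_self C₀]
end
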